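/- Let (x, y, s, t) ∈ ℤ⁴ satisfy x·s − y·t = 1 or x·s − y·t = −1. Then there exists a finite sequence of moves, each of which is either A_m(x, y, s, t) = (x, y + m·x, s + m·t, t) for some integer m or B_n(x, y, s, t) = (x + n·y, y, s, t + n·s) for some integer n, transforming (x, y, s, t) into a quadruple of the form (x′, 0, s′, 0); moreover any such endpoint satisfies x′·s′ = x·s − y·t, hence x′ and s′ both lie in {1, −1}. (This is the algebraic content of the paper's Lemma: if a pair of surgeries (a, b; x/y, s/t) on a Hopf link a ∪ b satisfies |xs − yt| = 1, then it can be realized by a finite sequence of alternate twistings along a and b.) -/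

import Mathlib

/-- `m`-twist along the component `a` of a Hopf link, acting on the quadruple
`(x, y, s, t)` of surgery coefficients `(x/y, s/t)`. -/
def twistA (m : ℤ) (p : ℤ × ℤ × ℤ × ℤ) : ℤ × ℤ × ℤ × ℤ :=
  (p.1, p.2.1 + m * p.1, p.2.2.1 + m * p.2.2.2, p.2.2.2)

/-- `n`-twist along the component `b` of a Hopf link. -/
def twistB (n : ℤ) (p : ℤ × ℤ × ℤ × ℤ) : ℤ × ℤ × ℤ × ℤ :=
  (p.1 + n * p.2.1, p.2.1, p.2.2.1, p.2.2.2 + n * p.2.2.1)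

/-- One twist move: either `A_m` for some integer `m` or `B_n` for some integer `n`. -/
def quadStep (p q : ℤ × ℤ × ℤ × ℤ) : Prop :=
  (∃ m : ℤ, q = twistA m p) ∨ (∃ n : ℤ, q = twistB n p)

def inv4 (p : ℤ × ℤ × ℤ × ℤ) : ℤ := p.1 * p.2.2.1 - p.2.1 * p.2.2.2

lemma quadStep_inv {p q : ℤ × ℤ × ℤ × ℤ} (h : quadStep p q) : inv4 q = inv4 p := by
  rcases h with ⟨m, rfl⟩ | ⟨n, rfl⟩ <;> simp only [twistA, twistB, inv4] <;> ring

lemma rtg_inv {p q : ℤ × ℤ × ℤ × ℤ} (h : Relation.ReflTransGen quadStep p q) :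
    inv4 q = inv4 p := by
  induction h with
  | refl => rfl
  | tail _ hs ih => rw [quadStep_inv hs, ih]

lemma reach (k : ℕ) : ∀ x y s t : ℤ, y.natAbs = k → (x*s - y*t = 1 ∨ x*s - y*t = -1) →
    ∃ x' s', Relation.ReflTransGen quadStep (x,y,s,t) (x',0,s',0) := by
  induction k using Nat.strong_induction_on with
  | _ k ih =>
    intro x y s t hk h
    by_cases hy : y = 0
    · subst hy
      have hxs : x * s = 1 ∨ x * s = -1 := by simpa using h
      have hs : s = 1 ∨ s = -1 := by
        refine Int.isUnit_iff.mp ?_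
        rcases hxs with h1 | h1
        · exact IsUnit.of_mul_eq_one (a := s) x (by rw [mul_comm]; exact h1)
        · exact IsUnit.of_mul_eq_one (a := s) (-x) (by rw [mul_neg, mul_comm, h1, neg_neg])
      have hs2 : s * s = 1 := by rcases hs with rfl | rfl <;> ring
      refine ⟨x, s, Relation.ReflTransGen.single (Or.inr ⟨-t * s, ?_⟩)⟩
      simp only [twistB]
      refine Prod.ext (by ring) (Prod.ext rfl (Prod.ext rfl ?_))
      show (0 : ℤ) = t + -t * s * s
      rcases hs with rfl | rfl <;> ring
    · -- step 1: B with n = -(x / y)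
      set n := -(x / y) with hn
      set r := x % y with hr
      have hx1 : x + n * y = r := by rw [hn, hr, Int.emod_def]; ring
      set t1 := t + n * s with ht1
      have step1 : quadStep (x, y, s, t) (r, y, s, t1) := Or.inr ⟨n, by
        simp only [twistB]; rw [← hx1]⟩
      have hinv1 : r * s - y * t1 = x * s - y * t := by
        have := quadStep_inv step1
        simpa [inv4] using this
      have hrlt : r.natAbs < k := by
        rw [← hk]
        have h1 : 0 ≤ r := Int.emod_nonneg x hy
        have h2 : r < |y| := by rw [Int.abs_eq_natAbs]; exact Int.emod_lt x hy
        have h3 := Int.abs_eq_natAbs y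
        omega
      by_cases hr0 : r = 0
      · -- then y * t1 = ∓1, y is a unit
        have hyt : y * t1 = 1 ∨ y * t1 = -1 := by
          rcases h with h1 | h1 <;> [right; left] <;> rw [hr0] at hinv1 <;> omega
        have hy1 : y = 1 ∨ y = -1 := Int.isUnit_iff.mp (by
          rcases hyt with h1 | h1
          · exact IsUnit.of_mul_eq_one (a := y) t1 h1
          · exact IsUnit.of_mul_eq_one (a := y) (-t1) (by linarith))
        -- step 2: B with n = y, making x = y*y = 1
        have step2 : quadStep (r, y, s, t1) (r + y * y, y, s, t1 + y * s) :=
          Or.inr ⟨y, rfl⟩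
        -- step 3: A with m = -y : y + (-y)*(r + y*y) = y - y = 0 since r = 0, y*y=1
        have hyy : y * y = 1 := by rcases hy1 with rfl | rfl <;> ring
        have step3 : quadStep (r + y * y, y, s, t1 + y * s)
            (r + y * y, 0, s + -y * (t1 + y * s), t1 + y * s) := Or.inl ⟨-y, by
          simp only [twistA]
          refine Prod.ext rfl (Prod.ext ?_ rfl)
          show (0:ℤ) = y + -y * (r + y * y)
          rw [hr0, hyy]; ring⟩
        -- step 4: finish killing t. use ih with k' = 0
        have hchain : Relation.ReflTransGen quadStep (x, y, s, t)
            (r + y * y, 0, s + -y * (t1 + y * s), t1 + y * s) :=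
          .tail (.tail (.single step1) step2) step3
        have hinv := rtg_inv hchain
        simp only [inv4] at hinv
        obtain ⟨x', s', hfin⟩ := ih 0 (by omega) (r + y*y) 0 (s + -y * (t1 + y*s))
          (t1 + y*s) rfl (by rw [hinv]; simpa using h)
        exact ⟨x', s', hchain.trans hfin⟩
      · -- step 2: A with m = -(y / r), giving y1 = y % r
        set m := -(y / r) with hm
        set y1 := y % r with hy1
        have hy1eq : y + m * r = y1 := by rw [hm, hy1, Int.emod_def]; ring
        have step2 : quadStep (r, y, s, t1) (r, y1, s + m * t1, t1) := Or.inl ⟨m, by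
          simp only [twistA]; rw [← hy1eq]⟩
        have hchain : Relation.ReflTransGen quadStep (x, y, s, t)
            (r, y1, s + m * t1, t1) := .tail (.single step1) step2
        have hinv := rtg_inv hchain
        simp only [inv4] at hinv
        have hy1lt : y1.natAbs < k := by
          have h1 : 0 ≤ y1 := Int.emod_nonneg y hr0
          have h2 : y1 < |r| := by rw [Int.abs_eq_natAbs]; exact Int.emod_lt y hr0
          have h3 : |r| = r := abs_of_nonneg (Int.emod_nonneg x hy)
          have h4 : r < |y| := by rw [Int.abs_eq_natAbs]; exact Int.emod_lt x hy
          have h5 := Int.abs_eq_natAbs y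
          omega
        obtain ⟨x', s', hfin⟩ := ih y1.natAbs hy1lt r y1 (s + m*t1) t1 rfl
          (by rw [hinv]; simpa using h)
        exact ⟨x', s', hchain.trans hfin⟩


/-- If `x·s − y·t = ±1`, then some finite sequence of twist moves `A_m`, `B_n`
transforms `(x, y, s, t)` into a quadruple of the form `(x′, 0, s′, 0)`;
moreover, any quadruple `(x′, 0, s′, 0)` so reached satisfies
`x′·s′ = x·s − y·t`, hence `x′` and `s′` both lie in `{1, −1}`. -/
theorem hopf_pair_of_surgeries_realized_by_twists
    (x y s t : ℤ) (h : x * s - y * t = 1 ∨ x * s - y * t = -1) :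
    (∃ x' s' : ℤ, Relation.ReflTransGen quadStep (x, y, s, t) (x', 0, s', 0)) ∧
    (∀ x' s' : ℤ, Relation.ReflTransGen quadStep (x, y, s, t) (x', 0, s', 0) →
      x' * s' = x * s - y * t ∧ (x' = 1 ∨ x' = -1) ∧ (s' = 1 ∨ s' = -1)) := by
  constructor
  · exact reach y.natAbs x y s t rfl h
  · intro x' s' hr
    have hinv := rtg_inv hr
    simp only [inv4] at hinv
    have hx's' : x' * s' = x * s - y * t := by omega
    have hu : x' * s' = 1 ∨ x' * s' = -1 := by omega
    refine ⟨hx's', ?_, ?_⟩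
    · refine Int.isUnit_iff.mp ?_
      rcases hu with h1 | h1
      · exact IsUnit.of_mul_eq_one (a := x') s' h1
      · exact IsUnit.of_mul_eq_one (a := x') (-s') (by rw [mul_neg, h1, neg_neg])
    · refine Int.isUnit_iff.mp ?_
      rcases hu with h1 | h1
      · exact IsUnit.of_mul_eq_one (a := s') x' (by rw [mul_comm]; exact h1)
      · exact IsUnit.of_mul_eq_one (a := s') (-x') (by rw [mul_neg, mul_comm, h1, neg_neg])
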